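/- Let M = (M_p)_{p∈ℕ₀} and L = (L_p)_{p∈ℕ₀} be sequences of positive reals with M_0 = L_0 = 1, with quotient sequences m and ℓ. Then: (1) if m ≃ ℓ then M ≈ L; (2) if M and L are both logarithmically convex and at least one of them is of moderate growth, then M ≈ L if, and only if, m ≃ ℓ. -/
import Mathlib


open Filter Real Topology

open Finset



lemma prodq (M : ℕ → ℝ) (hpos : ∀ p, 0 < M p) (hM0 : M 0 = 1) :
    ∀ p, M p = ∏ i ∈ Finset.range p, (M (i + 1) / M i) := by
  intro p
  induction p with
  | zero => simp [hM0]
  | succ p ih =>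
    rw [Finset.prod_range_succ, ← ih]
    field_simp [(hpos p).ne']

lemma segq (M : ℕ → ℝ) (hpos : ∀ p, 0 < M p) (p q : ℕ) :
    M (p + q) = M p * ∏ i ∈ Finset.range q, (M (p + i + 1) / M (p + i)) := by
  induction q with
  | zero => simp
  | succ q ih =>
    rw [Finset.prod_range_succ, ← mul_assoc, ← ih, show p + (q+1) = (p+q)+1 from rfl]
    field_simp [(hpos (p+q)).ne']

lemma qmono (M : ℕ → ℝ) (hpos : ∀ p, 0 < M p)
    (hlc : ∀ p, (M (p + 1)) ^ 2 ≤ M p * M (p + 2)) :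
    Monotone (fun p => M (p + 1) / M p) := by
  apply monotone_nat_of_le_succ
  intro p
  rw [div_le_div_iff₀ (hpos p) (hpos (p+1))]
  nlinarith [hlc p]

lemma self_up (M : ℕ → ℝ) (hpos : ∀ p, 0 < M p) (hM0 : M 0 = 1)
    (hlc : ∀ p, (M (p + 1)) ^ 2 ≤ M p * M (p + 2)) (p : ℕ) :
    M p ≤ (M (p + 1) / M p) ^ p := by
  calc M p = ∏ i ∈ Finset.range p, (M (i + 1) / M i) := prodq M hpos hM0 p
    _ ≤ ∏ _i ∈ Finset.range p, (M (p + 1) / M p) := by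
        apply Finset.prod_le_prod
        · intro i _; exact (div_pos (hpos _) (hpos _)).le
        · intro i hi
          exact qmono M hpos hlc (Nat.le_of_lt (Finset.mem_range.mp hi))
    _ = (M (p + 1) / M p) ^ p := by rw [Finset.prod_const, Finset.card_range]

lemma seg_low (M : ℕ → ℝ) (hpos : ∀ p, 0 < M p)
    (hlc : ∀ p, (M (p + 1)) ^ 2 ≤ M p * M (p + 2)) (p : ℕ) :
    (M (p + 1) / M p) ^ p * M p ≤ M (p + p) := by
  rw [segq M hpos p p, mul_comm (M p)]
  apply mul_le_mul_of_nonneg_right _ (hpos p).le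
  calc (M (p + 1) / M p) ^ p
      = ∏ _i ∈ Finset.range p, (M (p + 1) / M p) := by
        rw [Finset.prod_const, Finset.card_range]
    _ ≤ ∏ i ∈ Finset.range p, (M (p + i + 1) / M (p + i)) := by
        apply Finset.prod_le_prod
        · intro i _; exact (div_pos (hpos _) (hpos _)).le
        · intro i _
          exact qmono M hpos hlc (Nat.le_add_right p i)


lemma lemA (M L : ℕ → ℝ) (hMpos : ∀ p, 0 < M p) (hLpos : ∀ p, 0 < L p)
    (hL0 : L 0 = 1)
    (hMlc : ∀ p, (M (p + 1)) ^ 2 ≤ M p * M (p + 2))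
    (hLlc : ∀ p, (L (p + 1)) ^ 2 ≤ L p * L (p + 2))
    (A C : ℝ) (hA : 0 < A) (hC : 0 < C)
    (hmg : ∀ p q, M (p + q) ≤ A ^ (p + q) * M p * M q)
    (hup : ∀ p, M p ≤ C ^ p * L p) (p : ℕ) (hp : p ≠ 0) :
    M (p + 1) / M p ≤ (A ^ 2 * C) * (L (p + 1) / L p) := by
  set m := M (p + 1) / M p with hm
  set l := L (p + 1) / L p with hl
  have hlpos : 0 < l := div_pos (hLpos _) (hLpos _)
  have hmpos : 0 < m := div_pos (hMpos _) (hMpos _)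
  have h5 : m ^ p * M p ≤ (A ^ 2 * C * l) ^ p * M p := by
    calc m ^ p * M p ≤ M (p + p) := seg_low M hMpos hMlc p
      _ ≤ A ^ (p + p) * M p * M p := hmg p p
      _ ≤ A ^ (p + p) * (C ^ p * L p) * M p := by
          gcongr <;> first | exact (hMpos _).le | exact hup p | positivity
      _ ≤ A ^ (p + p) * (C ^ p * l ^ p) * M p := by
          gcongr <;> first | exact (hMpos _).le | exact self_up L hLpos hL0 hLlc p | positivity
      _ = (A ^ 2 * C * l) ^ p * M p := by
          rw [mul_pow, mul_pow, ← pow_mul, two_mul]; ring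
  have h6 : m ^ p ≤ (A ^ 2 * C * l) ^ p := le_of_mul_le_mul_right h5 (hMpos p)
  exact le_of_pow_le_pow_left₀ hp (by positivity) h6

lemma lemB (M L : ℕ → ℝ) (hMpos : ∀ p, 0 < M p) (hLpos : ∀ p, 0 < L p)
    (hM0 : M 0 = 1)
    (hMlc : ∀ p, (M (p + 1)) ^ 2 ≤ M p * M (p + 2))
    (hLlc : ∀ p, (L (p + 1)) ^ 2 ≤ L p * L (p + 2))
    (A C D : ℝ) (hA : 0 < A) (hC : 0 < C) (hD : 0 < D)
    (hmg : ∀ p q, M (p + q) ≤ A ^ (p + q) * M p * M q)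
    (hlow : ∀ p, D ^ p * L p ≤ M p)
    (hup : ∀ p, M p ≤ C ^ p * L p) (p : ℕ) (hp : p ≠ 0) :
    L (p + 1) / L p ≤ (A ^ 2 * C / D ^ 2) * (M (p + 1) / M p) := by
  set m := M (p + 1) / M p with hm
  set l := L (p + 1) / L p with hl
  have hlpos : 0 < l := div_pos (hLpos _) (hLpos _)
  have hmpos : 0 < m := div_pos (hMpos _) (hMpos _)
  have h5 : (D ^ 2 * l) ^ p * L p ≤ (A ^ 2 * C * m) ^ p * L p := by
    calc (D ^ 2 * l) ^ p * L p = D ^ (p + p) * (l ^ p * L p) := by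
          rw [mul_pow, ← pow_mul, two_mul]; ring
      _ ≤ D ^ (p + p) * L (p + p) := by
          gcongr
          exact seg_low L hLpos hLlc p
      _ ≤ M (p + p) := hlow (p + p)
      _ ≤ A ^ (p + p) * M p * M p := hmg p p
      _ ≤ A ^ (p + p) * (m ^ p) * (C ^ p * L p) := by
          have h1 := self_up M hMpos hM0 hMlc p
          have h2 := hup p
          calc A ^ (p + p) * M p * M p
              ≤ A ^ (p + p) * (m ^ p) * M p := by
                gcongr <;> first | exact (hMpos _).le | exact h1 | positivity
            _ ≤ A ^ (p + p) * (m ^ p) * (C ^ p * L p) := by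
                gcongr <;> first | exact h2 | positivity
      _ = (A ^ 2 * C * m) ^ p * L p := by
          rw [mul_pow, mul_pow, ← pow_mul, two_mul]; ring
  have h6 : (D ^ 2 * l) ^ p ≤ (A ^ 2 * C * m) ^ p := le_of_mul_le_mul_right h5 (hLpos p)
  have h7 : D ^ 2 * l ≤ A ^ 2 * C * m := le_of_pow_le_pow_left₀ hp (by positivity) h6
  rw [div_mul_eq_mul_div, le_div_iff₀ (by positivity)]
  linarith

lemma part1 (M L : ℕ → ℝ) (hMpos : ∀ p, 0 < M p) (hLpos : ∀ p, 0 < L p)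
    (hM0 : M 0 = 1) (hL0 : L 0 = 1) (c d : ℝ) (hc : 0 < c) (hd : 0 < d)
    (h : ∀ p : ℕ, d * (L (p + 1) / L p) ≤ M (p + 1) / M p ∧
        M (p + 1) / M p ≤ c * (L (p + 1) / L p)) (p : ℕ) :
    d ^ p * L p ≤ M p ∧ M p ≤ c ^ p * L p := by
  constructor
  · calc d ^ p * L p = ∏ i ∈ Finset.range p, (d * (L (i + 1) / L i)) := by
          rw [Finset.prod_mul_distrib, Finset.prod_const, Finset.card_range,
            ← prodq L hLpos hL0 p]
      _ ≤ ∏ i ∈ Finset.range p, (M (i + 1) / M i) := by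
          apply Finset.prod_le_prod
          · intro i _; exact mul_nonneg hd.le (div_pos (hLpos _) (hLpos _)).le
          · intro i _; exact (h i).1
      _ = M p := (prodq M hMpos hM0 p).symm
  · calc M p = ∏ i ∈ Finset.range p, (M (i + 1) / M i) := prodq M hMpos hM0 p
      _ ≤ ∏ i ∈ Finset.range p, (c * (L (i + 1) / L i)) := by
          apply Finset.prod_le_prod
          · intro i _; exact (div_pos (hMpos _) (hMpos _)).le
          · intro i _; exact (h i).2
      _ = c ^ p * L p := by
          rw [Finset.prod_mul_distrib, Finset.prod_const, Finset.card_range,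
            ← prodq L hLpos hL0 p]
lemma wrap (M L : ℕ → ℝ) (hMpos : ∀ p, 0 < M p) (hLpos : ∀ p, 0 < L p)
    (c₁ d₁ : ℝ) (hc₁ : 0 < c₁) (hd₁ : 0 < d₁)
    (hup : ∀ p : ℕ, p ≠ 0 → M (p + 1) / M p ≤ c₁ * (L (p + 1) / L p))
    (hlow : ∀ p : ℕ, p ≠ 0 → d₁ * (L (p + 1) / L p) ≤ M (p + 1) / M p) :
    ∃ c : ℝ, 0 < c ∧ ∃ d : ℝ, 0 < d ∧ ∀ p : ℕ,
      d * (L (p + 1) / L p) ≤ M (p + 1) / M p ∧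
      M (p + 1) / M p ≤ c * (L (p + 1) / L p) := by
  set r : ℝ := (M 1 / M 0) / (L 1 / L 0) with hr
  have hl0 : 0 < L 1 / L 0 := div_pos (hLpos 1) (hLpos 0)
  have hrpos : 0 < r := div_pos (div_pos (hMpos 1) (hMpos 0)) hl0
  have hr0 : M 1 / M 0 = r * (L 1 / L 0) := by
    rw [hr, div_mul_cancel₀ _ hl0.ne']
  refine ⟨max c₁ r, lt_of_lt_of_le hc₁ (le_max_left _ _), min d₁ r,
    lt_min hd₁ hrpos, fun p => ?_⟩
  rcases Nat.eq_zero_or_pos p with hp | hp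
  · subst hp
    constructor
    · calc min d₁ r * (L 1 / L 0) ≤ r * (L 1 / L 0) := by
            exact mul_le_mul_of_nonneg_right (min_le_right _ _) hl0.le
        _ = M 1 / M 0 := hr0.symm
    · calc M 1 / M 0 = r * (L 1 / L 0) := hr0
        _ ≤ max c₁ r * (L 1 / L 0) := mul_le_mul_of_nonneg_right (le_max_right _ _) hl0.le
  · have hp' : p ≠ 0 := hp.ne'
    have hlp : 0 < L (p + 1) / L p := div_pos (hLpos _) (hLpos _)
    constructor
    · calc min d₁ r * (L (p + 1) / L p) ≤ d₁ * (L (p + 1) / L p) :=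
            mul_le_mul_of_nonneg_right (min_le_left _ _) hlp.le
        _ ≤ M (p + 1) / M p := hlow p hp'
    · calc M (p + 1) / M p ≤ c₁ * (L (p + 1) / L p) := hup p hp'
        _ ≤ max c₁ r * (L (p + 1) / L p) :=
            mul_le_mul_of_nonneg_right (le_max_left _ _) hlp.le

/-- For sequences `M`, `L` of positive reals with `M 0 = L 0 = 1`, with
quotient sequences `m`, `ℓ`:
(1) if `m ≃ ℓ` then `M ≈ L`;
(2) if `M` and `L` are both logarithmically convex and at least one of them is of
moderate growth, then `M ≈ L` iff `m ≃ ℓ`. -/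
theorem stmt_3 (M L : ℕ → ℝ) (hMpos : ∀ p, 0 < M p) (hLpos : ∀ p, 0 < L p)
    (hM0 : M 0 = 1) (hL0 : L 0 = 1) :
    ((∃ c : ℝ, 0 < c ∧ ∃ d : ℝ, 0 < d ∧ ∀ p : ℕ,
        d * (L (p + 1) / L p) ≤ M (p + 1) / M p ∧
        M (p + 1) / M p ≤ c * (L (p + 1) / L p)) →
      (∃ C : ℝ, 0 < C ∧ ∃ D : ℝ, 0 < D ∧ ∀ p : ℕ,
        D ^ p * L p ≤ M p ∧ M p ≤ C ^ p * L p)) ∧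
    (((∀ p : ℕ, (M (p + 1)) ^ 2 ≤ M p * M (p + 2)) ∧
      (∀ p : ℕ, (L (p + 1)) ^ 2 ≤ L p * L (p + 2)) ∧
      ((∃ A : ℝ, 0 < A ∧ ∀ p q : ℕ, M (p + q) ≤ A ^ (p + q) * M p * M q) ∨
       (∃ A : ℝ, 0 < A ∧ ∀ p q : ℕ, L (p + q) ≤ A ^ (p + q) * L p * L q))) →
      ((∃ C : ℝ, 0 < C ∧ ∃ D : ℝ, 0 < D ∧ ∀ p : ℕ,
          D ^ p * L p ≤ M p ∧ M p ≤ C ^ p * L p) ↔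
        (∃ c : ℝ, 0 < c ∧ ∃ d : ℝ, 0 < d ∧ ∀ p : ℕ,
          d * (L (p + 1) / L p) ≤ M (p + 1) / M p ∧
          M (p + 1) / M p ≤ c * (L (p + 1) / L p)))) := by
  have hpart1 : (∃ c : ℝ, 0 < c ∧ ∃ d : ℝ, 0 < d ∧ ∀ p : ℕ,
      d * (L (p + 1) / L p) ≤ M (p + 1) / M p ∧
      M (p + 1) / M p ≤ c * (L (p + 1) / L p)) →
      (∃ C : ℝ, 0 < C ∧ ∃ D : ℝ, 0 < D ∧ ∀ p : ℕ,
        D ^ p * L p ≤ M p ∧ M p ≤ C ^ p * L p) := by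
    rintro ⟨c, hc, d, hd, h⟩
    exact ⟨c, hc, d, hd, fun p => part1 M L hMpos hLpos hM0 hL0 c d hc hd h p⟩
  refine ⟨hpart1, ?_⟩
  rintro ⟨hMlc, hLlc, hmg⟩
  refine ⟨?_, hpart1⟩
  rintro ⟨C, hC, D, hD, happ⟩
  have hup : ∀ p, M p ≤ C ^ p * L p := fun p => (happ p).2
  have hlow : ∀ p, D ^ p * L p ≤ M p := fun p => (happ p).1
  rcases hmg with ⟨A, hA, hAmg⟩ | ⟨A, hA, hAmg⟩
  · -- M has moderate growth
    apply wrap M L hMpos hLpos (A ^ 2 * C) ((A ^ 2 * C / D ^ 2)⁻¹) (by positivity)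
      (by positivity)
    · intro p hp
      exact lemA M L hMpos hLpos hL0 hMlc hLlc A C hA hC hAmg hup p hp
    · intro p hp
      have h := lemB M L hMpos hLpos hM0 hMlc hLlc A C D hA hC hD hAmg hlow hup p hp
      have hK : (0:ℝ) < A ^ 2 * C / D ^ 2 := by positivity
      calc (A ^ 2 * C / D ^ 2)⁻¹ * (L (p + 1) / L p)
          ≤ (A ^ 2 * C / D ^ 2)⁻¹ * ((A ^ 2 * C / D ^ 2) * (M (p + 1) / M p)) :=
            mul_le_mul_of_nonneg_left h (inv_nonneg.mpr hK.le)
        _ = M (p + 1) / M p := by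
            rw [← mul_assoc, inv_mul_cancel₀ hK.ne', one_mul]
  · -- L has moderate growth
    have hup' : ∀ p, L p ≤ (1 / D) ^ p * M p := by
      intro p
      rw [div_pow, one_pow, div_mul_eq_mul_div, one_mul, le_div_iff₀ (by positivity),
        mul_comm]
      exact hlow p
    have hlow' : ∀ p, (1 / C) ^ p * M p ≤ L p := by
      intro p
      rw [div_pow, one_pow, div_mul_eq_mul_div, one_mul, div_le_iff₀ (by positivity)]
      exact (hup p).trans_eq (mul_comm _ _)
    have hDpos : (0:ℝ) < 1 / D := by positivity
    have hCpos : (0:ℝ) < 1 / C := by positivity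
    -- lemA with roles swapped: ℓ ≤ A²(1/D) m
    -- lemB with roles swapped: m ≤ (A²(1/D)/(1/C)²) ℓ
    apply wrap M L hMpos hLpos (A ^ 2 * (1 / D) / (1 / C) ^ 2) ((A ^ 2 * (1 / D))⁻¹)
      (by positivity) (by positivity)
    · intro p hp
      exact lemB L M hLpos hMpos hL0 hLlc hMlc A (1 / D) (1 / C) hA hDpos hCpos
        hAmg hlow' hup' p hp
    · intro p hp
      have h := lemA L M hLpos hMpos hM0 hLlc hMlc A (1 / D) hA hDpos hAmg hup' p hp
      have hK : (0:ℝ) < A ^ 2 * (1 / D) := by positivity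
      calc (A ^ 2 * (1 / D))⁻¹ * (L (p + 1) / L p)
          ≤ (A ^ 2 * (1 / D))⁻¹ * ((A ^ 2 * (1 / D)) * (M (p + 1) / M p)) :=
            mul_le_mul_of_nonneg_left h (inv_nonneg.mpr hK.le)
        _ = M (p + 1) / M p := by
            rw [← mul_assoc, inv_mul_cancel₀ hK.ne', one_mul]
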